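/- Let C be a binary minimal code of length 3(k-1) and dimension k ≥ 3. Then C is equivalent (up to coordinate permutation) to a code with generator matrix G = (I_k | P), where P is a k × (2k-3) binary matrix each of whose rows has Hamming weight k-1 and each of whose columns has even Hamming weight; moreover the minimum distance of C is k. -/

import Mathlib

open Finset

/-- The support of a vector: the set of coordinates where it is nonzero. -/
def codeSupp {F : Type*} [Zero F] {n : ℕ} (x : Fin n → F) : Set (Fin n) :=
  {i | x i ≠ 0}

/-- A linear code is minimal if no nonzero codeword has its support strictly
containing the support of another nonzero codeword. -/
def IsMinimalCode {F : Type*} [Field F] {n : ℕ} (C : Submodule F (Fin n → F)) : Prop :=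
  ∀ c ∈ C, c ≠ 0 → ∀ c' ∈ C, c' ≠ 0 → ¬ codeSupp c' ⊂ codeSupp c

namespace ShortMinimal

abbrev F2 := ZMod 2

set_option linter.unusedSectionVars false

lemma f2_ne_zero' : ∀ a : F2, a ≠ 0 → a = 1 := by decide

lemma f2_ne_zero {a : F2} (h : a ≠ 0) : a = 1 := f2_ne_zero' a h

variable {ι : Type*} [Fintype ι] [DecidableEq ι]

/-- Finset support of a vector. -/
def supp (v : ι → F2) : Finset ι := Finset.univ.filter (fun j => v j ≠ 0)

lemma mem_supp {v : ι → F2} {j : ι} : j ∈ supp v ↔ v j ≠ 0 := by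
  simp [supp]

lemma wt_eq_card_supp (v : ι → F2) : hammingNorm v = (supp v).card := by
  simp [hammingNorm, supp]

lemma supp_add (y c : ι → F2) :
    supp (y + c) = (supp y ∪ supp c) \ (supp y ∩ supp c) := by
  ext j
  simp only [mem_supp, Finset.mem_sdiff, Finset.mem_union, Finset.mem_inter, Pi.add_apply]
  have : ∀ a b : F2, (a + b ≠ 0) ↔ ((a ≠ 0 ∨ b ≠ 0) ∧ ¬(a ≠ 0 ∧ b ≠ 0)) := by decide
  exact this (y j) (c j)

lemma wt_add (y c : ι → F2) :
    hammingNorm (y + c) + 2 * (supp y ∩ supp c).card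
      = hammingNorm y + hammingNorm c := by
  rw [wt_eq_card_supp, wt_eq_card_supp, wt_eq_card_supp, supp_add]
  have hsub : supp y ∩ supp c ⊆ supp y ∪ supp c :=
    (Finset.inter_subset_left).trans Finset.subset_union_left
  have h1 := Finset.card_sdiff_add_card_eq_card hsub
  have h2 := Finset.card_union_add_card_inter (supp y) (supp c)
  omega

end ShortMinimal

namespace ShortMinimal

variable {ι : Type*} [Fintype ι] [DecidableEq ι]

/-- Restriction of a submodule's elements to a finite set of coordinates. -/
noncomputable def res (D : Submodule F2 (ι → F2)) (T : Finset ι) :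
    ↥D →ₗ[F2] (↥T → F2) :=
  (LinearMap.funLeft F2 F2 (Subtype.val : ↥T → ι)).comp D.subtype

lemma res_apply (D : Submodule F2 (ι → F2)) (T : Finset ι) (x : ↥D) (t : ↥T) :
    res D T x t = (x : ι → F2) t := rfl

lemma mem_ker_res {D : Submodule F2 (ι → F2)} {T : Finset ι} {x : ↥D} :
    x ∈ LinearMap.ker (res D T) ↔ ∀ j ∈ T, (x : ι → F2) j = 0 := by
  constructor
  · intro h j hj
    have := congrFun (LinearMap.mem_ker.mp h) ⟨j, hj⟩
    simpa [res_apply] using this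
  · intro h
    rw [LinearMap.mem_ker]
    funext t
    simpa [res_apply] using h t t.2

lemma finrank_le_res (D : Submodule F2 (ι → F2)) (T : Finset ι) :
    Module.finrank F2 D ≤ T.card
      + Module.finrank F2 (LinearMap.ker (res D T)) := by
  have h1 := LinearMap.finrank_range_add_finrank_ker (res D T)
  have h2 : Module.finrank F2 (LinearMap.range (res D T)) ≤ T.card := by
    have := Submodule.finrank_le (LinearMap.range (res D T))
    rwa [Module.finrank_fintype_fun_eq_card, Fintype.card_coe] at this
  omega

lemma card_supp_restrict (D : Submodule F2 (ι → F2)) (T : Finset ι) (x : ↥D) :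
    (supp (res D T x)).card = (supp (x : ι → F2) ∩ T).card := by
  refine Finset.card_bij (fun a _ => (a : ι)) ?_ ?_ ?_
  · intro a ha
    simp only [mem_supp, res_apply] at ha
    simp [mem_supp, ha, a.2]
  · intro a _ b _ h
    exact Subtype.ext h
  · intro b hb
    simp only [Finset.mem_inter, mem_supp] at hb
    exact ⟨⟨b, hb.2⟩, by simp [mem_supp, res_apply, hb.1], rfl⟩

lemma exists_max_wt (D : Submodule F2 (ι → F2)) :
    ∃ y ∈ D, ∀ x ∈ D, hammingNorm x ≤ hammingNorm y := by
  classical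
  obtain ⟨y, hy, hmax⟩ := Finset.exists_max_image
    (Finset.univ.filter (fun v : ι → F2 => v ∈ D)) hammingNorm
    ⟨0, by simp [Submodule.zero_mem]⟩
  refine ⟨y, by simpa using hy, fun x hx => hmax x (by simpa using hx)⟩

lemma wt_pos {v : ι → F2} (h : v ≠ 0) : 0 < hammingNorm v := by
  simpa [hammingNorm_pos_iff] using h

lemma exists_wt_ge_finrank (D : Submodule F2 (ι → F2)) :
    ∃ y ∈ D, Module.finrank F2 D ≤ hammingNorm y := by
  obtain ⟨y, hyD, hymax⟩ := exists_max_wt D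
  refine ⟨y, hyD, ?_⟩
  by_contra hlt
  push_neg at hlt
  set T := supp y with hT
  have hcard : T.card = hammingNorm y := (wt_eq_card_supp y).symm
  have h1 := finrank_le_res D T
  have hpos : 0 < Module.finrank F2 (LinearMap.ker (res D T)) := by omega
  obtain ⟨x, hxker, hx0⟩ :
      ∃ x ∈ LinearMap.ker (res D T), x ≠ 0 := by
    by_contra hem
    push_neg at hem
    have : LinearMap.ker (res D T) = ⊥ := by
      ext z; simp only [Submodule.mem_bot]
      exact ⟨fun hz => hem z hz, fun hz => by simp [hz]⟩
    rw [this, finrank_bot] at hpos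
    omega
  have hxv0 : (x : ι → F2) ≠ 0 := by
    intro h; exact hx0 (Subtype.ext h)
  have hdisj : supp y ∩ supp (x : ι → F2) = ∅ := by
    ext j
    simp only [Finset.mem_inter, mem_supp, Finset.notMem_empty, iff_false]
    rintro ⟨hjy, hjx⟩
    exact hjx (mem_ker_res.mp hxker j (mem_supp.mpr hjy))
  have hsum : hammingNorm (y + (x : ι → F2)) = hammingNorm y + hammingNorm (x : ι → F2) := by
    have := wt_add y (x : ι → F2)
    rw [hdisj] at this
    simpa using this
  have hmem : y + (x : ι → F2) ∈ D := D.add_mem hyD x.2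
  have := hymax _ hmem
  have hxpos := wt_pos hxv0
  omega

end ShortMinimal

namespace ShortMinimal

variable {n k : ℕ}

lemma codeSupp_eq_coe (v : Fin n → F2) : codeSupp v = ↑(supp v) := by
  ext j; simp [codeSupp, mem_supp]

lemma exists_mem_supp {v : Fin n → F2} (h : v ≠ 0) : ∃ j, j ∈ supp v := by
  by_contra hem
  push_neg at hem
  exact h (funext fun j => by
    have := hem j
    rw [mem_supp] at this
    push_neg at this
    exact this)

section Code

variable (C : Submodule F2 (Fin n → F2))

/-- Minimum distance bound: every nonzero codeword of a minimal code of
dimension `k` has weight at least `k`. -/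
lemma wt_lower (hdim : Module.finrank F2 C = k) (hmin : IsMinimalCode C) :
    ∀ c ∈ C, c ≠ 0 → k ≤ hammingNorm c := by
  intro c hc hc0
  by_contra hlt
  push_neg at hlt
  set T := supp c with hT
  have hcard : T.card = hammingNorm c := (wt_eq_card_supp c).symm
  have h1 := finrank_le_res C T
  rw [hdim] at h1
  have hpos : 0 < Module.finrank F2 (LinearMap.ker (res C T)) := by omega
  obtain ⟨x, hxker, hx0⟩ : ∃ x ∈ LinearMap.ker (res C T), x ≠ 0 := by
    by_contra hem
    push_neg at hem
    have : LinearMap.ker (res C T) = ⊥ := by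
      ext z; simp only [Submodule.mem_bot]
      exact ⟨fun hz => hem z hz, fun hz => by simp [hz]⟩
    rw [this, finrank_bot] at hpos
    omega
  have hxv0 : (x : Fin n → F2) ≠ 0 := fun h => hx0 (Subtype.ext h)
  have hxT : ∀ j ∈ T, (x : Fin n → F2) j = 0 := mem_ker_res.mp hxker
  obtain ⟨j0, hj0⟩ := exists_mem_supp hc0
  have hsumC : c + (x : Fin n → F2) ∈ C := C.add_mem hc x.2
  -- the support of x is strictly contained in that of c + x
  have hsub : codeSupp (x : Fin n → F2) ⊆ codeSupp (c + (x : Fin n → F2)) := by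
    intro j hj
    simp only [codeSupp, Set.mem_setOf_eq] at hj ⊢
    have hcj : c j = 0 := by
      by_contra hcj
      exact hj (hxT j (mem_supp.mpr hcj))
    simpa [Pi.add_apply, hcj] using hj
  have hne : codeSupp (x : Fin n → F2) ≠ codeSupp (c + (x : Fin n → F2)) := by
    intro heq
    have hx0j : (x : Fin n → F2) j0 = 0 := hxT j0 hj0
    have hcj0 : c j0 ≠ 0 := mem_supp.mp hj0
    have hmem : j0 ∈ codeSupp (c + (x : Fin n → F2)) := by
      simp only [codeSupp, Set.mem_setOf_eq, Pi.add_apply, hx0j, add_zero]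
      exact hcj0
    rw [← heq] at hmem
    simp only [codeSupp, Set.mem_setOf_eq] at hmem
    exact hmem hx0j
  have hss : codeSupp (x : Fin n → F2) ⊂ codeSupp (c + (x : Fin n → F2)) :=
    ⟨hsub, fun h => hne (le_antisymm hsub h)⟩
  have hsum0 : c + (x : Fin n → F2) ≠ 0 := by
    intro h
    have := congrFun h j0
    have hx0j : (x : Fin n → F2) j0 = 0 := hxT j0 hj0
    simp only [Pi.add_apply, hx0j, add_zero, Pi.zero_apply] at this
    exact (mem_supp.mp hj0) this
  exact hmin _ hsumC hsum0 _ x.2 hxv0 hss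

/-- The kernel of restriction to the complement of the support of a nonzero
codeword of a minimal code is spanned by that codeword. -/
lemma ker_res_compl (hmin : IsMinimalCode C) {c : Fin n → F2} (hc : c ∈ C) (hc0 : c ≠ 0) :
    LinearMap.ker (res C (supp c)ᶜ) = Submodule.span F2 {(⟨c, hc⟩ : ↥C)} := by
  apply le_antisymm
  · intro x hx
    have hxT : ∀ j ∈ (supp c)ᶜ, (x : Fin n → F2) j = 0 := mem_ker_res.mp hx
    by_cases hx0 : x = 0
    · simp [hx0, Submodule.zero_mem]
    · have hxv0 : (x : Fin n → F2) ≠ 0 := fun h => hx0 (Subtype.ext h)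
      -- supp x ⊆ supp c
      have hsub : codeSupp (x : Fin n → F2) ⊆ codeSupp c := by
        intro j hj
        simp only [codeSupp, Set.mem_setOf_eq] at hj ⊢
        by_contra hcj
        exact hj (hxT j (by simp [Finset.mem_compl, mem_supp, hcj]))
      have heq : codeSupp (x : Fin n → F2) = codeSupp c := by
        by_contra hne
        exact hmin c hc hc0 _ x.2 hxv0 ⟨hsub, fun h => hne (le_antisymm hsub h)⟩
      have : (x : Fin n → F2) = c := by
        funext j
        by_cases hj : c j = 0
        · have : j ∉ codeSupp (x : Fin n → F2) := by
            rw [heq]; simp [codeSupp, hj]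
          simp only [codeSupp, Set.mem_setOf_eq, not_not] at this
          rw [this, hj]
        · have : j ∈ codeSupp (x : Fin n → F2) := by
            rw [heq]; simp [codeSupp, hj]
          simp only [codeSupp, Set.mem_setOf_eq] at this
          rw [f2_ne_zero this, f2_ne_zero hj]
      have : x = ⟨c, hc⟩ := Subtype.ext this
      rw [this]
      exact Submodule.mem_span_singleton_self _
  · rw [Submodule.span_le, Set.singleton_subset_iff]
    rw [SetLike.mem_coe, mem_ker_res]
    intro j hj
    rw [Finset.mem_compl, mem_supp] at hj
    push_neg at hj
    exact hj

/-- Every nonzero codeword of a minimal `[3(k-1), k]` code has weight at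
most `2k-2`. -/
lemma wt_upper (hn : n = 3 * (k - 1)) (hk : 3 ≤ k)
    (hdim : Module.finrank F2 C = k) (hmin : IsMinimalCode C) :
    ∀ c ∈ C, c ≠ 0 → hammingNorm c + 2 ≤ 2 * k := by
  intro c hc hc0
  have hker := ker_res_compl C hmin hc hc0
  have hrk := LinearMap.finrank_range_add_finrank_ker (res C (supp c)ᶜ)
  rw [hdim, hker] at hrk
  have hone : Module.finrank F2 (Submodule.span F2 {(⟨c, hc⟩ : ↥C)}) = 1 := by
    apply finrank_span_singleton
    intro h
    exact hc0 (by simpa using congrArg (Subtype.val) h)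
  rw [hone] at hrk
  have hle : Module.finrank F2 (LinearMap.range (res C (supp c)ᶜ)) ≤ ((supp c)ᶜ).card := by
    have := Submodule.finrank_le (LinearMap.range (res C (supp c)ᶜ))
    rwa [Module.finrank_fintype_fun_eq_card, Fintype.card_coe] at this
  have hcompl : ((supp c)ᶜ).card = n - (supp c).card := by
    rw [Finset.card_compl, Fintype.card_fin]
  have hsupp_le : (supp c).card ≤ n := by
    have := Finset.card_le_univ (supp c)
    simpa using this
  rw [wt_eq_card_supp]
  omega


/-- A minimal `[3(k-1), k]` binary code contains a codeword of weight
exactly `k`. -/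
lemma exists_min_word (hn : n = 3 * (k - 1)) (hk : 3 ≤ k)
    (hdim : Module.finrank F2 C = k) (hmin : IsMinimalCode C) :
    ∃ s ∈ C, hammingNorm s = k := by
  classical
  -- a nonzero codeword exists
  obtain ⟨v0, hv0C, hv00⟩ : ∃ v0 ∈ C, v0 ≠ 0 := by
    by_contra hem
    push_neg at hem
    have : C = ⊥ := by
      ext z; simp only [Submodule.mem_bot]
      exact ⟨fun hz => hem z hz, fun hz => by simp [hz]⟩
    rw [this, finrank_bot] at hdim
    omega
  -- a maximum-weight codeword
  obtain ⟨c, hcC, hcmax⟩ := exists_max_wt C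
  have hc0 : c ≠ 0 := by
    intro h
    have h1 := hcmax v0 hv0C
    have h2 := wt_lower C hdim hmin v0 hv0C hv00
    rw [h, hammingNorm_zero] at h1
    omega
  set T' := (supp c)ᶜ with hT'
  -- the restriction to the complement of supp c has rank k-1
  have hker := ker_res_compl C hmin hcC hc0
  have hrk := LinearMap.finrank_range_add_finrank_ker (res C T')
  rw [hdim, hT', hker] at hrk
  have hone : Module.finrank F2 (Submodule.span F2 {(⟨c, hcC⟩ : ↥C)}) = 1 := by
    apply finrank_span_singleton
    intro h
    exact hc0 (by simpa using congrArg (Subtype.val) h)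
  rw [hone] at hrk
  rw [← hT'] at hrk
  -- the residual code contains a word of weight ≥ k-1
  obtain ⟨y', hy'D, hy'wt⟩ := exists_wt_ge_finrank (LinearMap.range (res C T'))
  obtain ⟨yC, hyCres⟩ := hy'D
  set y : Fin n → F2 := (yC : Fin n → F2) with hy
  have hyC : y ∈ C := yC.2
  have hinterR : (supp y ∩ T').card = hammingNorm y' := by
    rw [wt_eq_card_supp, ← hyCres, card_supp_restrict]
  -- combinatorial identities
  have hid := wt_add y c
  have hsd : supp y \ supp c = supp y ∩ T' := by
    ext j; simp [hT', Finset.mem_sdiff, Finset.mem_compl, Finset.mem_inter]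
  have hsplit := Finset.card_inter_add_card_sdiff (supp y) (supp c)
  rw [hsd] at hsplit
  have hy_le := hcmax y hyC
  have hyc_le := hcmax (y + c) (C.add_mem hyC hcC)
  have hfr : Module.finrank F2 (LinearMap.range (res C T')) + 1 = k := hrk
  have hup := wt_upper C hn hk hdim hmin c hcC hc0
  have hwy : hammingNorm y = (supp y).card := wt_eq_card_supp y
  -- weight of c is exactly 2k-2
  have hB : hammingNorm c + 2 = 2 * k := by omega
  -- the residual space is everything
  have hcardT' : T'.card + hammingNorm c = n := by
    rw [hT', Finset.card_compl, Fintype.card_fin, ← wt_eq_card_supp]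
    have hsupp_le : hammingNorm c ≤ n := by
      rw [wt_eq_card_supp]
      simpa using Finset.card_le_univ (supp c)
    omega
  have hT'card : T'.card = k - 1 := by omega
  have htop : LinearMap.range (res C T') = ⊤ := by
    apply Submodule.eq_top_of_finrank_eq
    rw [Module.finrank_fintype_fun_eq_card, Fintype.card_coe, hT'card]
    omega
  -- pick a coordinate outside the support of c
  have hT'ne : T'.Nonempty := by
    rw [← Finset.card_pos, hT'card]
    omega
  obtain ⟨j0, hj0⟩ := hT'ne
  -- lift the corresponding unit vector
  have hsingle : (Pi.single (⟨j0, hj0⟩ : ↥T') (1 : F2) : ↥T' → F2) ∈ LinearMap.range (res C T') := by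
    rw [htop]; trivial
  obtain ⟨sC, hsCres⟩ := hsingle
  set s : Fin n → F2 := (sC : Fin n → F2) with hs
  have hsC : s ∈ C := sC.2
  have hs_at : ∀ t : ↥T', s (t : Fin n) = (Pi.single (⟨j0, hj0⟩ : ↥T') (1 : F2) : ↥T' → F2) t := by
    intro t
    have := congrFun hsCres t
    exact this
  have hsj0 : s j0 = 1 := by
    have := hs_at ⟨j0, hj0⟩
    simpa using this
  have hcj0 : c j0 = 0 := by
    have := hj0
    rw [hT', Finset.mem_compl, mem_supp] at this
    push_neg at this
    exact this
  -- the restriction of s to T' has weight 1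
  have hres1 : (supp s ∩ T').card = 1 := by
    have h1 : (supp s ∩ T').card = (supp (res C T' sC)).card :=
      (card_supp_restrict C T' sC).symm
    rw [hsCres] at h1
    rw [h1]
    have : supp (Pi.single (⟨j0, hj0⟩ : ↥T') (1 : F2) : ↥T' → F2) = {(⟨j0, hj0⟩ : ↥T')} := by
      ext t
      rw [mem_supp, Finset.mem_singleton, Pi.single_apply]
      constructor
      · intro h
        by_contra hne
        simp [hne] at h
      · intro h
        simp [h]
    rw [this, Finset.card_singleton]
  -- s is nonzero, s + c is nonzero
  have hs0 : s ≠ 0 := by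
    intro h
    rw [h] at hsj0
    simp at hsj0
  have hsc0 : s + c ≠ 0 := by
    intro h
    have := congrFun h j0
    simp [hsj0, hcj0] at this
  -- now the weight bookkeeping
  have hid2 := wt_add s c
  have hsd2 : supp s \ supp c = supp s ∩ T' := by
    ext j; simp [hT', Finset.mem_sdiff, Finset.mem_compl, Finset.mem_inter]
  have hsplit2 := Finset.card_inter_add_card_sdiff (supp s) (supp c)
  rw [hsd2, hres1] at hsplit2
  have hws := wt_eq_card_supp s
  have hlow_s := wt_lower C hdim hmin s hsC hs0
  have hlow_sc := wt_lower C hdim hmin (s + c) (C.add_mem hsC hcC) hsc0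
  exact ⟨s, hsC, by omega⟩

end Code
end ShortMinimal

namespace ShortMinimal

lemma f2_one_add_one : (1 : F2) + 1 = 0 := by decide

lemma wt_comp_perm {N : ℕ} (v : Fin N → F2) (π : Equiv.Perm (Fin N)) :
    hammingNorm (fun j => v (π j)) = hammingNorm v := by
  rw [wt_eq_card_supp, wt_eq_card_supp]
  refine Finset.card_bij' (fun a _ => π a) (fun b _ => π.symm b) ?_ ?_ ?_ ?_
  · intro a ha; rw [mem_supp] at ha ⊢; exact ha
  · intro b hb; rw [mem_supp] at hb ⊢; simpa using hb
  · intro a _; simp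
  · intro b _; simp

end ShortMinimal

open ShortMinimal in
theorem structure_of_short_binary_minimal' {k : ℕ} (hk : 3 ≤ k)
    (C : Submodule (ZMod 2) (Fin (3 * (k - 1)) → ZMod 2))
    (hdim : Module.finrank (ZMod 2) C = k) (hmin : IsMinimalCode C) :
    (∃ π : Equiv.Perm (Fin (3 * (k - 1))),
      ∃ G : Matrix (Fin k) (Fin (3 * (k - 1))) (ZMod 2),
        (∀ (i : Fin k) (j : Fin (3 * (k - 1))), (j : ℕ) < k →
          G i j = if (i : ℕ) = (j : ℕ) then 1 else 0) ∧
        (∀ i : Fin k, hammingNorm (G i) = k) ∧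
        (∀ j : Fin (3 * (k - 1)), k ≤ (j : ℕ) →
          Even (Finset.univ.filter (fun i : Fin k => G i j ≠ 0)).card) ∧
        Submodule.map (LinearMap.funLeft (ZMod 2) (ZMod 2) π) C =
          LinearMap.range G.vecMulLinear) ∧
    IsLeast {w | ∃ c ∈ C, c ≠ 0 ∧ hammingNorm c = w} k := by
  classical
  have hkn : k ≤ 3 * (k - 1) := by omega
  obtain ⟨s, hsC, hswt⟩ := exists_min_word C rfl hk hdim hmin
  have hs0 : s ≠ 0 := by
    intro h; rw [h, hammingNorm_zero] at hswt; omega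
  set T : Finset (Fin (3 * (k - 1))) := supp s with hT
  have hTcard : T.card = k := by rw [hT, ← wt_eq_card_supp, hswt]
  have hsT : ∀ j ∈ T, s j = 1 := fun j hj => f2_ne_zero (mem_supp.mp hj)
  have hsout : ∀ j, j ∉ T → s j = 0 := by
    intro j hj
    rw [hT, mem_supp] at hj
    push_neg at hj
    exact hj
  -- restriction to T is injective
  have hker : LinearMap.ker (res C T) = ⊥ := by
    rw [eq_bot_iff]
    intro x hx
    rw [mem_ker_res] at hx
    simp only [Submodule.mem_bot]
    by_contra hx0
    have hxv0 : (x : Fin (3 * (k - 1)) → F2) ≠ 0 := fun h => hx0 (Subtype.ext h)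
    obtain ⟨j1, hj1⟩ := exists_mem_supp hxv0
    have hj1T : j1 ∉ T := by
      intro hmem
      exact (mem_supp.mp hj1) (hx j1 hmem)
    have hsumC : s + (x : Fin (3 * (k - 1)) → F2) ∈ C := C.add_mem hsC x.2
    have hsub : codeSupp s ⊆ codeSupp (s + (x : Fin (3 * (k - 1)) → F2)) := by
      intro j hj
      simp only [codeSupp, Set.mem_setOf_eq] at hj ⊢
      have hxj : (x : Fin (3 * (k - 1)) → F2) j = 0 := hx j (mem_supp.mpr hj)
      simpa [hxj] using hj
    have hne : codeSupp s ≠ codeSupp (s + (x : Fin (3 * (k - 1)) → F2)) := by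
      intro heq
      have hsj1 : s j1 = 0 := hsout j1 hj1T
      have : j1 ∈ codeSupp (s + (x : Fin (3 * (k - 1)) → F2)) := by
        simp only [codeSupp, Set.mem_setOf_eq, Pi.add_apply, hsj1, zero_add]
        exact mem_supp.mp hj1
      rw [← heq] at this
      simp only [codeSupp, Set.mem_setOf_eq] at this
      exact this hsj1
    have hsum0 : s + (x : Fin (3 * (k - 1)) → F2) ≠ 0 := by
      intro h
      obtain ⟨j2, hj2⟩ := exists_mem_supp hs0
      have := congrFun h j2
      have hxj2 : (x : Fin (3 * (k - 1)) → F2) j2 = 0 := hx j2 hj2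
      simp only [Pi.add_apply, hxj2, add_zero, Pi.zero_apply] at this
      exact (mem_supp.mp hj2) this
    exact hmin _ hsumC hsum0 s hsC hs0 ⟨hsub, fun h => hne (le_antisymm hsub h)⟩
  have hinj : Function.Injective (res C T) := LinearMap.ker_eq_bot.mp hker
  have hfr_eq : Module.finrank F2 ↥C = Module.finrank F2 (↥T → F2) := by
    rw [hdim, Module.finrank_fintype_fun_eq_card, Fintype.card_coe, hTcard]
  have hsurj : Function.Surjective (res C T) :=
    (LinearMap.injective_iff_surjective_of_finrank_eq_finrank hfr_eq).mp hinj
  let e : ↥C ≃ₗ[F2] (↥T → F2) := LinearEquiv.ofBijective (res C T) ⟨hinj, hsurj⟩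
  let rt : ↥T → ↥C := fun t => e.symm (Pi.single t 1)
  have hrt_res : ∀ t : ↥T, res C T (rt t) = Pi.single t 1 := by
    intro t
    have h1 : e (rt t) = Pi.single t 1 := e.apply_symm_apply _
    exact h1
  have hval : ∀ t t' : ↥T,
      ((rt t : ↥C) : Fin (3 * (k - 1)) → F2) (t' : Fin (3 * (k - 1)))
        = (Pi.single t (1 : F2) : ↥T → F2) t' :=
    fun t t' => congrFun (hrt_res t) t'
  -- every rt has weight exactly k
  have hrtwt : ∀ t : ↥T, hammingNorm ((rt t : ↥C) : Fin (3 * (k - 1)) → F2) = k := by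
    intro t
    set v : Fin (3 * (k - 1)) → F2 := ((rt t : ↥C) : Fin (3 * (k - 1)) → F2) with hv
    have hvC : v ∈ C := (rt t).2
    have hvt : v (t : Fin (3 * (k - 1))) = 1 := by
      have := hval t t
      simpa using this
    have hv0 : v ≠ 0 := by
      intro h; rw [h] at hvt; simp at hvt
    have hvT : ∀ j, ∀ hj : j ∈ T, j ≠ (t : Fin (3 * (k - 1))) → v j = 0 := by
      intro j hj hne
      have h1 := hval t ⟨j, hj⟩
      rw [Pi.single_apply] at h1
      have hne' : (⟨j, hj⟩ : ↥T) ≠ t := fun h => hne (congrArg Subtype.val h)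
      simpa [hne'] using h1
    have hint : supp v ∩ T = {(t : Fin (3 * (k - 1)))} := by
      ext j
      simp only [Finset.mem_inter, mem_supp, Finset.mem_singleton]
      constructor
      · rintro ⟨hjv, hjT⟩
        by_contra hne
        exact hjv (hvT j hjT hne)
      · intro h
        subst h
        exact ⟨by rw [hvt]; exact one_ne_zero, t.2⟩
    have hsplitv := Finset.card_inter_add_card_sdiff (supp v) T
    rw [hint, Finset.card_singleton] at hsplitv
    set sc : Fin (3 * (k - 1)) → F2 := s + v with hsc
    have hscC : sc ∈ C := C.add_mem hsC hvC
    have hscT : supp sc ∩ T = T.erase (t : Fin (3 * (k - 1))) := by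
      ext j
      simp only [Finset.mem_inter, mem_supp, Finset.mem_erase]
      constructor
      · rintro ⟨hjsc, hjT⟩
        refine ⟨?_, hjT⟩
        intro hje
        subst hje
        apply hjsc
        simp only [hsc, Pi.add_apply, hsT _ hjT, hvt, f2_one_add_one]
      · rintro ⟨hne, hjT⟩
        refine ⟨?_, hjT⟩
        simp only [hsc, Pi.add_apply, hsT _ hjT, hvT j hjT hne, add_zero]
        exact one_ne_zero
    have houtside : ∀ j, j ∉ T → sc j = v j := by
      intro j hj
      simp only [hsc, Pi.add_apply, hsout j hj, zero_add]
    have hscdiff : supp sc \ T = supp v \ T := by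
      ext j
      simp only [Finset.mem_sdiff, mem_supp]
      constructor
      · rintro ⟨h1, h2⟩; exact ⟨by rwa [houtside j h2] at h1, h2⟩
      · rintro ⟨h1, h2⟩; exact ⟨by rwa [houtside j h2], h2⟩
    have hsplitsc := Finset.card_inter_add_card_sdiff (supp sc) T
    rw [hscT, hscdiff, Finset.card_erase_of_mem t.2, hTcard] at hsplitsc
    -- sc is nonzero
    obtain ⟨t2, ht2T, ht2ne⟩ :=
      Finset.exists_mem_ne (by omega : 1 < T.card) (t : Fin (3 * (k - 1)))
    have hsc0 : sc ≠ 0 := by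
      intro h
      have := congrFun h t2
      simp only [hsc, Pi.add_apply, hsT _ ht2T, hvT t2 ht2T ht2ne, add_zero,
        Pi.zero_apply] at this
      exact one_ne_zero this
    have hlow := wt_lower C hdim hmin v hvC hv0
    have hup := wt_upper C rfl hk hdim hmin sc hscC hsc0
    have hwv := wt_eq_card_supp v
    have hwsc := wt_eq_card_supp sc
    omega
  -- the sum of the rt equals s
  have hsum : (∑ t : ↥T, rt t) = (⟨s, hsC⟩ : ↥C) := by
    apply hinj
    rw [map_sum]
    have h2 : (∑ t : ↥T, res C T (rt t)) = fun _ => (1 : F2) := by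
      rw [Finset.sum_congr rfl (fun t _ => hrt_res t)]
      have := Finset.univ_sum_single (fun _ : ↥T => (1 : F2))
      simpa using this
    rw [h2]
    funext t'
    rw [res_apply]
    exact (hsT _ t'.2).symm
  have hsumv : (∑ t : ↥T, ((rt t : ↥C) : Fin (3 * (k - 1)) → F2)) = s := by
    have h := congrArg (Subtype.val) hsum
    simpa [AddSubmonoidClass.coe_finset_sum] using h
  -- build the permutation
  have hTc : Tᶜ.card = 3 * (k - 1) - k := by
    rw [Finset.card_compl, Fintype.card_fin, hTcard]
  let oi : Fin k ≃o ↥T := T.orderIsoOfFin hTcard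
  let oc : Fin (3 * (k - 1) - k) ≃o ↥(Tᶜ) := Tᶜ.orderIsoOfFin hTc
  let f : Fin (3 * (k - 1)) → Fin (3 * (k - 1)) := fun j =>
    if h : (j : ℕ) < k then (oi ⟨j, h⟩ : ↥T)
    else (oc ⟨(j : ℕ) - k, by have := j.isLt; omega⟩ : ↥(Tᶜ))
  have hfmem1 : ∀ (j : Fin (3 * (k - 1))) (h : (j : ℕ) < k),
      f j = ((oi ⟨j, h⟩ : ↥T) : Fin (3 * (k - 1))) := by
    intro j h
    simp only [f, dif_pos h]
  have hfmem2 : ∀ (j : Fin (3 * (k - 1))), ¬ (j : ℕ) < k → f j ∈ Tᶜ := by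
    intro j h
    simp only [f, dif_neg h]
    exact (oc _).2
  have hfinj : Function.Injective f := by
    intro a b hab
    by_cases ha : (a : ℕ) < k <;> by_cases hb : (b : ℕ) < k
    · rw [hfmem1 a ha, hfmem1 b hb] at hab
      have h1 : oi ⟨a, ha⟩ = oi ⟨b, hb⟩ := Subtype.ext hab
      have h2 := oi.injective h1
      have h3 : (a : ℕ) = (b : ℕ) := by simpa using h2
      exact Fin.ext h3
    · exfalso
      have h1 : f a ∈ T := by rw [hfmem1 a ha]; exact (oi _).2
      have h2 := hfmem2 b hb
      rw [hab] at h1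
      rw [Finset.mem_compl] at h2
      exact h2 h1
    · exfalso
      have h1 : f b ∈ T := by rw [hfmem1 b hb]; exact (oi _).2
      have h2 := hfmem2 a ha
      rw [← hab] at h1
      rw [Finset.mem_compl] at h2
      exact h2 h1
    · simp only [f, dif_neg ha, dif_neg hb] at hab
      have h1 := oc.injective (Subtype.ext hab)
      have h2 : (a : ℕ) - k = (b : ℕ) - k := by simpa using h1
      have := a.isLt
      have := b.isLt
      apply Fin.ext
      omega
  let π : Equiv.Perm (Fin (3 * (k - 1))) :=
    Equiv.ofBijective f (Finite.injective_iff_bijective.mp hfinj)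
  have hπ : ∀ j, π j = f j := fun j => rfl
  -- the generator matrix
  let G : Matrix (Fin k) (Fin (3 * (k - 1))) (ZMod 2) :=
    Matrix.of fun i j => ((rt (oi i) : ↥C) : Fin (3 * (k - 1)) → F2) (π j)
  refine ⟨⟨π, G, ?_, ?_, ?_, ?_⟩, ⟨⟨s, hsC, hs0, hswt⟩, ?_⟩⟩
  · -- identity part
    intro i j hj
    have hπj : π j = ((oi ⟨j, hj⟩ : ↥T) : Fin (3 * (k - 1))) := by
      rw [hπ, hfmem1 j hj]
    have h1 : G i j = ((rt (oi i) : ↥C) : Fin (3 * (k - 1)) → F2) (π j) := rfl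
    rw [h1, hπj]
    have h2 := hval (oi i) (oi ⟨j, hj⟩)
    rw [h2, Pi.single_apply]
    by_cases hij : (i : ℕ) = (j : ℕ)
    · have : (⟨j, hj⟩ : Fin k) = i := Fin.ext hij.symm
      rw [this]
      simp [hij]
    · have : (⟨j, hj⟩ : Fin k) ≠ i := fun h => hij (congrArg Fin.val h).symm
      have hne : oi ⟨j, hj⟩ ≠ oi i := fun h => this (oi.injective h)
      simp [hne, hij]
  · -- row weights
    intro i
    have h1 : G i = fun j => ((rt (oi i) : ↥C) : Fin (3 * (k - 1)) → F2) (π j) := rfl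
    rw [h1, wt_comp_perm, hrtwt]
  · -- even columns
    intro j hj
    have hπj : π j ∈ Tᶜ := by
      rw [hπ]
      exact hfmem2 j (by omega)
    have hπjT : π j ∉ T := Finset.mem_compl.mp hπj
    have hzero : (∑ i : Fin k, G i j) = 0 := by
      have h1 : (∑ i : Fin k, G i j)
          = ∑ t : ↥T, ((rt t : ↥C) : Fin (3 * (k - 1)) → F2) (π j) := by
        apply Fintype.sum_equiv oi.toEquiv
        intro i
        rfl
      rw [h1]
      have h2 : (∑ t : ↥T, ((rt t : ↥C) : Fin (3 * (k - 1)) → F2) (π j)) = s (π j) := by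
        rw [← hsumv, Finset.sum_apply]
      rw [h2]
      exact hsout _ hπjT
    have hcast : ((Finset.univ.filter (fun i : Fin k => G i j ≠ 0)).card : F2) = 0 := by
      have hsum2 : (∑ i : Fin k, G i j)
          = ((Finset.univ.filter (fun i : Fin k => G i j ≠ 0)).card : F2) := by
        rw [← Finset.sum_filter_ne_zero Finset.univ]
        rw [Finset.sum_congr rfl (fun i hi => f2_ne_zero (Finset.mem_filter.mp hi).2)]
        rw [Finset.sum_const, nsmul_eq_mul, mul_one]
      rw [← hsum2, hzero]
    have hdvd : 2 ∣ (Finset.univ.filter (fun i : Fin k => G i j ≠ 0)).card :=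
      (ZMod.natCast_eq_zero_iff _ 2).mp hcast
    exact even_iff_two_dvd.mpr hdvd
  · -- the row space
    have hrows : Set.range G
        = (LinearMap.funLeft F2 F2 ⇑π) ''
          (Set.range (fun t : ↥T => ((rt t : ↥C) : Fin (3 * (k - 1)) → F2))) := by
      ext g
      constructor
      · rintro ⟨i, rfl⟩
        exact ⟨_, ⟨oi i, rfl⟩, rfl⟩
      · rintro ⟨v, ⟨t, rfl⟩, rfl⟩
        refine ⟨oi.symm t, ?_⟩
        have : oi (oi.symm t) = t := oi.apply_symm_apply t
        funext j
        simp only [G, Matrix.of_apply, this]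
        rfl
    have hspan : Submodule.span F2
        (Set.range (fun t : ↥T => ((rt t : ↥C) : Fin (3 * (k - 1)) → F2))) = C := by
      apply le_antisymm
      · rw [Submodule.span_le]
        rintro g ⟨t, rfl⟩
        exact (rt t).2
      · intro x hx
        have hx1 : (⟨x, hx⟩ : ↥C) = ∑ t : ↥T, (res C T ⟨x, hx⟩ t) • rt t := by
          apply hinj
          rw [map_sum]
          funext t'
          rw [Finset.sum_apply]
          have hterm : ∀ t : ↥T,
              (res C T ((res C T ⟨x, hx⟩ t) • rt t)) t'
                = if t' = t then res C T ⟨x, hx⟩ t else 0 := by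
            intro t
            rw [map_smul]
            have : (res C T (rt t)) t' = if t' = t then 1 else 0 := by
              rw [hrt_res t, Pi.single_apply]
            simp only [Pi.smul_apply, this, smul_eq_mul]
            by_cases h : t' = t
            · simp [h]
            · simp [h]
          rw [Finset.sum_congr rfl (fun t _ => hterm t)]
          rw [Finset.sum_ite_eq Finset.univ t' (fun t => res C T ⟨x, hx⟩ t)]
          simp
        have hx2 : x = ∑ t : ↥T, (res C T ⟨x, hx⟩ t) • ((rt t : ↥C) : Fin (3 * (k - 1)) → F2) := by
          have h := congrArg (Subtype.val) hx1
          simpa [AddSubmonoidClass.coe_finset_sum, SetLike.val_smul] using h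
        rw [hx2]
        apply Submodule.sum_mem
        intro t _
        apply Submodule.smul_mem
        apply Submodule.subset_span
        exact ⟨t, rfl⟩
    rw [range_vecMulLinear, show Set.range G.row = Set.range G from rfl, hrows, Submodule.span_image, hspan]
  · -- lower bound of IsLeast
    rintro w ⟨c, hc, hc0, rfl⟩
    exact wt_lower C hdim hmin c hc hc0

/-- A binary minimal code of length `3(k-1)` and dimension `k ≥ 3` is
equivalent, via a permutation of coordinates, to a code with generator matrix
`G = (I_k | P)` in which every row of `G` has Hamming weight `k` (i.e. every
row of `P` has weight `k-1`) and every column of `P` has even weight;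
moreover the minimum distance of the code is `k`. -/
theorem structure_of_short_binary_minimal {k : ℕ} (hk : 3 ≤ k)
    (C : Submodule (ZMod 2) (Fin (3 * (k - 1)) → ZMod 2))
    (hdim : Module.finrank (ZMod 2) C = k) (hmin : IsMinimalCode C) :
    (∃ π : Equiv.Perm (Fin (3 * (k - 1))),
      ∃ G : Matrix (Fin k) (Fin (3 * (k - 1))) (ZMod 2),
        (∀ (i : Fin k) (j : Fin (3 * (k - 1))), (j : ℕ) < k →
          G i j = if (i : ℕ) = (j : ℕ) then 1 else 0) ∧
        (∀ i : Fin k, hammingNorm (G i) = k) ∧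
        (∀ j : Fin (3 * (k - 1)), k ≤ (j : ℕ) →
          Even (Finset.univ.filter (fun i : Fin k => G i j ≠ 0)).card) ∧
        Submodule.map (LinearMap.funLeft (ZMod 2) (ZMod 2) π) C =
          LinearMap.range G.vecMulLinear) ∧
    IsLeast {w | ∃ c ∈ C, c ≠ 0 ∧ hammingNorm c = w} k :=
  structure_of_short_binary_minimal' hk C hdim hmin
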